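/- arXiv:2012.12385 — 2 statements merged into one kernel-verified Lean document; each statement's English description precedes it below -/
import Mathlib

section
/- Let Γ be a circle in the Euclidean plane and let D be a point not on Γ. Let A, B, C and A₁, B₁, C₁ be two triples of noncollinear points on Γ such that D is not a vertex of and does not lie on any side line of either triangle. Let A', B', C' and A₁', B₁', C₁' be the vertices of the negative-pedal triangles of ABC and of A₁B₁C₁ with respect to D (defined by the perpendicularity conditions), each triple noncollinear. Let E be the circle through the three orthogonal projections of D onto the sides of ABC and let S be the circle through A', B', C'. Then the three orthogonal projections of D onto the sides of A₁B₁C₁ all lie on E if and only if A₁', B₁', C₁' all lie on S. In other words, two triangles inscribed in the same circle share the same pedal circle with respect to D if and only if they share the same negative-pedal circle with respect to D. -/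
open EuclideanGeometry

noncomputable section

/-- The Euclidean plane. -/
abbrev Pt : Type := EuclideanSpace ℝ (Fin 2)

/-- The line (affine span) through two points. -/
def L (X Y : Pt) : AffineSubspace ℝ Pt := affineSpan ℝ {X, Y}

/-- `F` is the orthogonal projection (foot of the perpendicular) of `D` onto the line `XY`. -/
def IsFoot (D X Y F : Pt) : Prop := F ∈ L X Y ∧ (inner ℝ (D - F) (X - Y) : ℝ) = 0

set_option maxHeartbeats 1000000

lemma inner_coords (x y : Pt) : (inner ℝ x y : ℝ) = x 0 * y 0 + x 1 * y 1 := by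
  simp [PiLp.inner_apply, Fin.sum_univ_two]; ring

/-- If `u` is orthogonal to two vectors with nonzero determinant, `u = 0`. -/
lemma perp_perp (a b u : Pt) (hdet : a 0 * b 1 - a 1 * b 0 ≠ 0)
    (h1 : (inner ℝ u a : ℝ) = 0) (h2 : (inner ℝ u b : ℝ) = 0) : u = 0 := by
  rw [inner_coords] at h1 h2
  have h0 : u 0 = 0 := by
    by_contra h
    apply hdet
    have e : u 0 * (a 0 * b 1 - a 1 * b 0) = (u 0 * a 0 + u 1 * a 1) * b 1 - (u 0 * b 0 + u 1 * b 1) * a 1 := by ring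
    rw [h1, h2] at e
    simpa [h] using e
  have h1' : u 1 = 0 := by
    by_contra h
    apply hdet
    have e : u 1 * (a 0 * b 1 - a 1 * b 0) = (u 0 * b 0 + u 1 * b 1) * a 0 - (u 0 * a 0 + u 1 * a 1) * b 0 := by ring
    rw [h1, h2] at e
    simpa [h] using e
  ext i
  fin_cases i
  · exact h0
  · exact h1'

/-- Zero determinant of difference vectors implies collinearity. -/
lemma collinear_of_det_eq_zero (P Q R : Pt)
    (hdet : (Q - P) 0 * (R - P) 1 - (Q - P) 1 * (R - P) 0 = 0) :
    Collinear ℝ ({P, Q, R} : Set Pt) := by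
  rcases eq_or_ne Q P with h | h
  · subst h
    have e : ({Q, Q, R} : Set Pt) = {Q, R} := Set.insert_eq_self.2 (Set.mem_insert Q {R})
    rw [e]
    exact collinear_pair ℝ Q R
  · set v := Q - P with hv
    have hvne : v ≠ 0 := sub_ne_zero.2 h
    have hn : v 0 * v 0 + v 1 * v 1 ≠ 0 := by
      have h' : (inner ℝ v v : ℝ) ≠ 0 := inner_self_ne_zero.2 hvne
      rwa [inner_coords v v] at h'
    rw [collinear_iff_exists_forall_eq_smul_vadd]
    refine ⟨P, v, ?_⟩
    intro p hp
    have key : ∀ w : Pt, v 0 * w 1 - v 1 * w 0 = 0 →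
        w = ((v 0 * w 0 + v 1 * w 1) / (v 0 * v 0 + v 1 * v 1)) • v := by
      intro w hw
      ext i
      fin_cases i
      · show w 0 = (v 0 * w 0 + v 1 * w 1) / (v 0 * v 0 + v 1 * v 1) * v 0
        rw [div_mul_eq_mul_div, eq_div_iff hn]
        linear_combination (- v 1) * hw
      · show w 1 = (v 0 * w 0 + v 1 * w 1) / (v 0 * v 0 + v 1 * v 1) * v 1
        rw [div_mul_eq_mul_div, eq_div_iff hn]
        linear_combination (v 0) * hw
    rcases hp with rfl | rfl | rfl
    · exact ⟨0, by simp⟩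
    · refine ⟨1, ?_⟩
      have : p - P = v := hv.symm
      simp only [vadd_eq_add, one_smul]
      rw [← this]; abel
    · refine ⟨(v 0 * (p - P) 0 + v 1 * (p - P) 1) / (v 0 * v 0 + v 1 * v 1), ?_⟩
      have hw : v 0 * (p - P) 1 - v 1 * (p - P) 0 = 0 := hdet
      have := key (p - P) hw
      simp only [vadd_eq_add]
      rw [← this]; abel

/-- Determinant criterion from non-collinearity. -/
lemma det_ne_zero_of_not_collinear (P Q R : Pt)
    (h : ¬ Collinear ℝ ({P, Q, R} : Set Pt)) :
    (Q - P) 0 * (R - P) 1 - (Q - P) 1 * (R - P) 0 ≠ 0 :=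
  fun hd => h (collinear_of_det_eq_zero P Q R hd)

/-- If `D` is not on the line `XY` (with `X ≠ Y`), then `D, X, Y` are not collinear. -/
lemma not_collinear_of_not_mem_line (D X Y : Pt) (hXY : X ≠ Y) (hD : D ∉ L X Y) :
    ¬ Collinear ℝ ({D, X, Y} : Set Pt) := by
  intro hc
  exact hD (hc.mem_affineSpan_of_mem_of_ne
    (Set.mem_insert_of_mem _ (Set.mem_insert _ _))
    (Set.mem_insert_of_mem _ (Set.mem_insert_of_mem _ rfl))
    (Set.mem_insert _ _) hXY)

/-- foot facts: the foot `F` of `D` on line `XY` satisfies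
`⟪F − D, X − D⟫ = ⟪F − D, Y − D⟫ = ‖F − D‖²`, and `F ≠ D`. -/
lemma foot_facts (D X Y F : Pt) (hXY : X ≠ Y) (hD : D ∉ L X Y) (hF : IsFoot D X Y F) :
    (inner ℝ (F - D) (X - D) : ℝ) = ‖F - D‖ ^ 2 ∧
    (inner ℝ (F - D) (Y - D) : ℝ) = ‖F - D‖ ^ 2 ∧ F ≠ D := by
  obtain ⟨hmem, hperp⟩ := hF
  have hFD : F ≠ D := fun h => hD (h ▸ hmem)
  -- get parametrization of the line
  have hcol : Collinear ℝ ({F, X, Y} : Set Pt) :=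
    collinear_insert_of_mem_affineSpan_pair hmem
  rw [collinear_iff_exists_forall_eq_smul_vadd] at hcol
  obtain ⟨p₀, v, hv⟩ := hcol
  obtain ⟨rf, hrf⟩ := hv F (Set.mem_insert _ _)
  obtain ⟨rx, hrx⟩ := hv X (Set.mem_insert_of_mem _ (Set.mem_insert _ _))
  obtain ⟨ry, hry⟩ := hv Y (Set.mem_insert_of_mem _ (Set.mem_insert_of_mem _ rfl))
  have hXF : X - F = (rx - rf) • v := by
    rw [hrx, hrf]; simp only [vadd_eq_add]; module
  have hYF : Y - F = (ry - rf) • v := by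
    rw [hry, hrf]; simp only [vadd_eq_add]; module
  have hXYv : X - Y = (rx - ry) • v := by
    rw [hrx, hry]; simp only [vadd_eq_add]; module
  have hrxry : rx ≠ ry := by
    intro h; apply hXY
    rw [hrx, hry, h]
  have hperpv : (inner ℝ (D - F) v : ℝ) = 0 := by
    rw [hXYv, real_inner_smul_right] at hperp
    rcases mul_eq_zero.1 hperp with h | h
    · exact (sub_ne_zero_of_ne hrxry h).elim
    · exact h
  have hFX : (inner ℝ (F - D) (X - F) : ℝ) = 0 := by
    rw [hXF, real_inner_smul_right]
    have : (inner ℝ (F - D) v : ℝ) = 0 := by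
      have := hperpv
      rw [show D - F = -(F - D) by abel, inner_neg_left] at this
      linarith
    rw [this]; ring
  have hFY : (inner ℝ (F - D) (Y - F) : ℝ) = 0 := by
    rw [hYF, real_inner_smul_right]
    have : (inner ℝ (F - D) v : ℝ) = 0 := by
      have := hperpv
      rw [show D - F = -(F - D) by abel, inner_neg_left] at this
      linarith
    rw [this]; ring
  refine ⟨?_, ?_, hFD⟩
  · have : X - D = (X - F) + (F - D) := by abel
    rw [this, inner_add_right, hFX, real_inner_self_eq_norm_sq]
    ring
  · have : Y - D = (Y - F) + (F - D) := by abel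
    rw [this, inner_add_right, hFY, real_inner_self_eq_norm_sq]
    ring

/-- Three distinct collinear points cannot lie on a common sphere. -/
lemma not_collinear_of_mem_sphere (E : Sphere Pt) (P Q R : Pt)
    (hP : P ∈ E) (hQ : Q ∈ E) (hR : R ∈ E)
    (hPQ : P ≠ Q) (hPR : P ≠ R) (hQR : Q ≠ R) :
    ¬ Collinear ℝ ({P, Q, R} : Set Pt) := by
  intro hc
  rw [collinear_iff_exists_forall_eq_smul_vadd] at hc
  obtain ⟨p₀, v, hv⟩ := hc
  obtain ⟨rp, hrp⟩ := hv P (Set.mem_insert _ _)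
  obtain ⟨rq, hrq⟩ := hv Q (Set.mem_insert_of_mem _ (Set.mem_insert _ _))
  obtain ⟨rr, hrr⟩ := hv R (Set.mem_insert_of_mem _ (Set.mem_insert_of_mem _ rfl))
  have hvne : v ≠ 0 := by
    rintro rfl
    simp only [smul_zero] at hrp hrq
    exact hPQ (by rw [hrp, hrq])
  -- squared distance is a quadratic in the parameter
  have key : ∀ r : ℝ, ∀ Z : Pt, Z = r • v +ᵥ p₀ → Z ∈ E →
      ‖v‖^2 * r^2 + 2 * (inner ℝ v (p₀ - E.center) : ℝ) * r + ‖p₀ - E.center‖^2 - E.radius^2 = 0 := by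
    intro r Z hZ hZE
    have hd : dist Z E.center = E.radius := by rwa [EuclideanGeometry.mem_sphere] at hZE
    have hd2 : ‖Z - E.center‖^2 = E.radius^2 := by
      rw [← dist_eq_norm, hd]
    have : Z - E.center = r • v + (p₀ - E.center) := by
      rw [hZ]; simp [vadd_eq_add]; abel
    rw [this] at hd2
    rw [norm_add_sq_real, norm_smul, real_inner_smul_left] at hd2
    simp only [norm_smul, Real.norm_eq_abs] at hd2
    nlinarith [hd2, sq_abs r, sq_abs (‖v‖), abs_nonneg r]
  have eP := key rp P hrp hP
  have eQ := key rq Q hrq hQ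
  have eR := key rr R hrr hR
  have hrpq : rp ≠ rq := fun h => hPQ (by rw [hrp, hrq, h])
  have hrpr : rp ≠ rr := fun h => hPR (by rw [hrp, hrr, h])
  have hrqr : rq ≠ rr := fun h => hQR (by rw [hrq, hrr, h])
  have hv2 : ‖v‖^2 ≠ 0 := pow_ne_zero 2 (norm_ne_zero_iff.2 hvne)
  -- quadratic with three distinct roots: contradiction
  have e1 : ‖v‖^2 * (rp^2 - rq^2) + 2 * (inner ℝ v (p₀ - E.center) : ℝ) * (rp - rq) = 0 := by linarith
  have e2 : ‖v‖^2 * (rp^2 - rr^2) + 2 * (inner ℝ v (p₀ - E.center) : ℝ) * (rp - rr) = 0 := by linarith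
  have f1 : ‖v‖^2 * (rp + rq) + 2 * (inner ℝ v (p₀ - E.center) : ℝ) = 0 := by
    have h := sub_ne_zero.2 hrpq
    have : (‖v‖^2 * (rp + rq) + 2 * (inner ℝ v (p₀ - E.center) : ℝ)) * (rp - rq) = 0 := by
      linear_combination e1
    exact (mul_eq_zero.1 this).resolve_right h
  have f2 : ‖v‖^2 * (rp + rr) + 2 * (inner ℝ v (p₀ - E.center) : ℝ) = 0 := by
    have h := sub_ne_zero.2 hrpr
    have : (‖v‖^2 * (rp + rr) + 2 * (inner ℝ v (p₀ - E.center) : ℝ)) * (rp - rr) = 0 := by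
      linear_combination e2
    exact (mul_eq_zero.1 this).resolve_right h
  have : ‖v‖^2 * (rq - rr) = 0 := by linarith
  rcases mul_eq_zero.1 this with h | h
  · exact hv2 h
  · exact hrqr (by linarith [sub_eq_zero.1 h])

lemma vertex_eq (D o : Pt) (qq : ℝ) (x y v f : Pt)
    (hdet : (x - D) 0 * (y - D) 1 - (x - D) 1 * (y - D) 0 ≠ 0)
    (hx : ‖x - D‖ ^ 2 = 2 * (inner ℝ (x - D) o : ℝ) - qq)
    (hy : ‖y - D‖ ^ 2 = 2 * (inner ℝ (y - D) o : ℝ) - qq)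
    (hfx : (inner ℝ (f - D) (x - D) : ℝ) = ‖f - D‖ ^ 2)
    (hfy : (inner ℝ (f - D) (y - D) : ℝ) = ‖f - D‖ ^ 2)
    (hfD : f ≠ D)
    (hv1 : (inner ℝ (v - x) (x - D) : ℝ) = 0)
    (hv2 : (inner ℝ (v - y) (y - D) : ℝ) = 0) :
    v = D + (2:ℝ) • o - (qq / ‖f - D‖ ^ 2) • (f - D) := by
  have hn : ‖f - D‖ ^ 2 ≠ 0 := pow_ne_zero 2 (norm_ne_zero_iff.2 (sub_ne_zero.2 hfD))
  set w : Pt := D + (2:ℝ) • o - (qq / ‖f - D‖ ^ 2) • (f - D) with hw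
  have hwD : w - D = (2:ℝ) • o - (qq / ‖f - D‖ ^ 2) • (f - D) := by
    rw [hw]; abel
  have key : ∀ z : Pt, ‖z - D‖ ^ 2 = 2 * (inner ℝ (z - D) o : ℝ) - qq →
      (inner ℝ (f - D) (z - D) : ℝ) = ‖f - D‖ ^ 2 →
      (inner ℝ (v - z) (z - D) : ℝ) = 0 → (inner ℝ (v - w) (z - D) : ℝ) = 0 := by
    intro z hz hfz hvz
    have hfz' : (inner ℝ (z - D) (f - D) : ℝ) = ‖f - D‖ ^ 2 := by
      rw [real_inner_comm]; exact hfz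
    have hwz : (inner ℝ (w - D) (z - D) : ℝ) = ‖z - D‖ ^ 2 := by
      have hc : (inner ℝ (z - D) o : ℝ) = inner ℝ o (z - D) := real_inner_comm _ _
      have hq : qq / ‖f - D‖ ^ 2 * ‖f - D‖ ^ 2 = qq := div_mul_cancel₀ qq hn
      rw [hwD, inner_sub_left, real_inner_smul_left, real_inner_smul_left, hfz, hq]
      linarith [hz, hc]
    have hsplit : v - w = (v - z) + ((z - D) - (w - D)) := by abel
    rw [hsplit, inner_add_left, hvz, inner_sub_left, real_inner_self_eq_norm_sq, hwz]
    ring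
  have h1 := key x hx hfx hv1
  have h2 := key y hy hfy hv2
  exact sub_eq_zero.1 (perp_perp (x - D) (y - D) (v - w) hdet h1 h2)

lemma phi_mem_sphere_iff (D o : Pt) (qq : ℝ) (S : Sphere Pt) (hrS : 0 ≤ S.radius)
    (z : Pt) (hz : z ≠ D) :
    (D + (2:ℝ) • o - (qq / ‖z - D‖ ^ 2) • (z - D)) ∈ S ↔
      (‖(2:ℝ) • o - (S.center - D)‖ ^ 2 - S.radius ^ 2) * ‖z - D‖ ^ 2
        - 2 * qq * (inner ℝ ((2:ℝ) • o - (S.center - D)) (z - D) : ℝ) + qq ^ 2 = 0 := by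
  have hn : (0:ℝ) < ‖z - D‖ ^ 2 :=
    pow_pos (norm_pos_iff.2 (sub_ne_zero.2 hz)) 2
  set u : Pt := (2:ℝ) • o - (S.center - D) with hu
  set φ : Pt := D + (2:ℝ) • o - (qq / ‖z - D‖ ^ 2) • (z - D) with hφ
  have hφc : φ - S.center = u - (qq / ‖z - D‖ ^ 2) • (z - D) := by
    rw [hφ, hu]; abel
  have hexp : ‖φ - S.center‖ ^ 2
      = ‖u‖ ^ 2 - 2 * (qq / ‖z - D‖ ^ 2) * (inner ℝ u (z - D) : ℝ)
        + (qq / ‖z - D‖ ^ 2) ^ 2 * ‖z - D‖ ^ 2 := by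
    rw [hφc, norm_sub_sq_real, real_inner_smul_right, norm_smul, mul_pow, Real.norm_eq_abs,
      sq_abs]
    ring
  have hid : (‖u‖ ^ 2 - S.radius ^ 2) * ‖z - D‖ ^ 2
        - 2 * qq * (inner ℝ u (z - D) : ℝ) + qq ^ 2
      = ‖z - D‖ ^ 2 * (‖φ - S.center‖ ^ 2 - S.radius ^ 2) := by
    rw [hexp]
    field_simp [(norm_pos_iff.2 (sub_ne_zero.2 hz)).ne']
    ring
  rw [EuclideanGeometry.mem_sphere, dist_eq_norm, ← sq_eq_sq₀ (norm_nonneg _) hrS, hid]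
  constructor
  · intro h; rw [h]; ring
  · intro h
    rcases mul_eq_zero.1 h with h' | h'
    · exact absurd h' hn.ne'
    · linarith [h']

lemma ne_of_not_collinear (P Q R : Pt) (h : ¬ Collinear ℝ ({P, Q, R} : Set Pt)) :
    P ≠ Q ∧ P ≠ R ∧ Q ≠ R := by
  refine ⟨?_, ?_, ?_⟩ <;> rintro rfl <;> apply h
  · exact (collinear_pair ℝ P R).subset (by intro x hx; rcases hx with rfl|rfl|rfl <;> simp)
  · exact (collinear_pair ℝ P Q).subset (by intro x hx; rcases hx with rfl|rfl|rfl <;> simp)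
  · exact (collinear_pair ℝ P Q).subset (by intro x hx; rcases hx with rfl|rfl|rfl <;> simp)

lemma center_perp (c m P Q : Pt) (h1 : ‖P - c‖ ^ 2 = ‖Q - c‖ ^ 2)
    (h2 : ‖P - m‖ ^ 2 = ‖Q - m‖ ^ 2) : (inner ℝ (c - m) (Q - P) : ℝ) = 0 := by
  have e1 : ‖P‖^2 - 2*(inner ℝ P c : ℝ) + ‖c‖^2 = ‖Q‖^2 - 2*(inner ℝ Q c : ℝ) + ‖c‖^2 := by
    rw [← norm_sub_sq_real, ← norm_sub_sq_real]; exact h1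
  have e2 : ‖P‖^2 - 2*(inner ℝ P m : ℝ) + ‖m‖^2 = ‖Q‖^2 - 2*(inner ℝ Q m : ℝ) + ‖m‖^2 := by
    rw [← norm_sub_sq_real, ← norm_sub_sq_real]; exact h2
  have c1 : (inner ℝ P c : ℝ) = inner ℝ c P := real_inner_comm _ _
  have c2 : (inner ℝ Q c : ℝ) = inner ℝ c Q := real_inner_comm _ _
  have c3 : (inner ℝ P m : ℝ) = inner ℝ m P := real_inner_comm _ _
  have c4 : (inner ℝ Q m : ℝ) = inner ℝ m Q := real_inner_comm _ _
  rw [inner_sub_left, inner_sub_right, inner_sub_right]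
  linarith

/-- **Corollary 4.4** -/
theorem pedal_circle_iff_negative_pedal_circle
    (Γ : EuclideanGeometry.Sphere Pt) (D : Pt) (hD : D ∉ Γ)
    (A B C A₁ B₁ C₁ : Pt)
    (hABC : ¬ Collinear ℝ ({A, B, C} : Set Pt))
    (hABC₁ : ¬ Collinear ℝ ({A₁, B₁, C₁} : Set Pt))
    (hA : A ∈ Γ) (hB : B ∈ Γ) (hC : C ∈ Γ)
    (hA₁ : A₁ ∈ Γ) (hB₁ : B₁ ∈ Γ) (hC₁ : C₁ ∈ Γ)
    (hDv : D ∉ ({A, B, C} : Set Pt)) (hDv₁ : D ∉ ({A₁, B₁, C₁} : Set Pt))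
    (hDa : D ∉ L B C) (hDb : D ∉ L C A) (hDc : D ∉ L A B)
    (hDa₁ : D ∉ L B₁ C₁) (hDb₁ : D ∉ L C₁ A₁) (hDc₁ : D ∉ L A₁ B₁)
    (A' B' C' : Pt)
    (h1 : (inner ℝ (A' - B) (B - D) : ℝ) = 0) (h2 : (inner ℝ (A' - C) (C - D) : ℝ) = 0)
    (h3 : (inner ℝ (B' - C) (C - D) : ℝ) = 0) (h4 : (inner ℝ (B' - A) (A - D) : ℝ) = 0)
    (h5 : (inner ℝ (C' - A) (A - D) : ℝ) = 0) (h6 : (inner ℝ (C' - B) (B - D) : ℝ) = 0)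
    (hnc' : ¬ Collinear ℝ ({A', B', C'} : Set Pt))
    (A₁' B₁' C₁' : Pt)
    (h1' : (inner ℝ (A₁' - B₁) (B₁ - D) : ℝ) = 0) (h2' : (inner ℝ (A₁' - C₁) (C₁ - D) : ℝ) = 0)
    (h3' : (inner ℝ (B₁' - C₁) (C₁ - D) : ℝ) = 0) (h4' : (inner ℝ (B₁' - A₁) (A₁ - D) : ℝ) = 0)
    (h5' : (inner ℝ (C₁' - A₁) (A₁ - D) : ℝ) = 0) (h6' : (inner ℝ (C₁' - B₁) (B₁ - D) : ℝ) = 0)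
    (hnc₁' : ¬ Collinear ℝ ({A₁', B₁', C₁'} : Set Pt))
    (Fa Fb Fc : Pt)
    (hFa : IsFoot D B C Fa) (hFb : IsFoot D C A Fb) (hFc : IsFoot D A B Fc)
    (E : EuclideanGeometry.Sphere Pt) (hFaE : Fa ∈ E) (hFbE : Fb ∈ E) (hFcE : Fc ∈ E)
    (S : EuclideanGeometry.Sphere Pt) (hA'S : A' ∈ S) (hB'S : B' ∈ S) (hC'S : C' ∈ S)
    (F₁a F₁b F₁c : Pt)
    (hF₁a : IsFoot D B₁ C₁ F₁a) (hF₁b : IsFoot D C₁ A₁ F₁b) (hF₁c : IsFoot D A₁ B₁ F₁c) :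
    (F₁a ∈ E ∧ F₁b ∈ E ∧ F₁c ∈ E) ↔ (A₁' ∈ S ∧ B₁' ∈ S ∧ C₁' ∈ S) := by
  -- basic distinctness
  obtain ⟨hAB, hAC, hBC⟩ := ne_of_not_collinear A B C hABC
  obtain ⟨hAB₁, hAC₁, hBC₁⟩ := ne_of_not_collinear A₁ B₁ C₁ hABC₁
  obtain ⟨hA'B', hA'C', hB'C'⟩ := ne_of_not_collinear A' B' C' hnc'
  -- the translated center and power of D
  set o : Pt := Γ.center - D with ho
  set qq : ℝ := ‖o‖ ^ 2 - Γ.radius ^ 2 with hqq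
  have hrΓ : 0 ≤ Γ.radius := by
    have := (EuclideanGeometry.mem_sphere).1 hA
    rw [← this]; exact dist_nonneg
  have hqq0 : qq ≠ 0 := by
    intro h
    apply hD
    rw [EuclideanGeometry.mem_sphere]
    have : ‖o‖ ^ 2 = Γ.radius ^ 2 := by rw [hqq] at h; linarith
    have hno : ‖o‖ = Γ.radius := (sq_eq_sq₀ (norm_nonneg _) hrΓ).1 this
    rw [← hno, ho, dist_eq_norm, norm_sub_rev]
  have hcirc : ∀ x : Pt, x ∈ Γ → ‖x - D‖ ^ 2 = 2 * (inner ℝ (x - D) o : ℝ) - qq := by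
    intro x hx
    have hd : dist x Γ.center = Γ.radius := (EuclideanGeometry.mem_sphere).1 hx
    have hd2 : ‖x - Γ.center‖ ^ 2 = Γ.radius ^ 2 := by rw [← dist_eq_norm, hd]
    have hsplit : x - Γ.center = (x - D) - o := by rw [ho]; abel
    rw [hsplit, norm_sub_sq_real] at hd2
    rw [hqq]
    linarith
  -- determinants
  have detBC := det_ne_zero_of_not_collinear D B C (not_collinear_of_not_mem_line D B C hBC hDa)
  have detCA := det_ne_zero_of_not_collinear D C A
    (not_collinear_of_not_mem_line D C A (Ne.symm hAC) hDb)
  have detAB := det_ne_zero_of_not_collinear D A B (not_collinear_of_not_mem_line D A B hAB hDc)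
  have detBC₁ := det_ne_zero_of_not_collinear D B₁ C₁
    (not_collinear_of_not_mem_line D B₁ C₁ hBC₁ hDa₁)
  have detCA₁ := det_ne_zero_of_not_collinear D C₁ A₁
    (not_collinear_of_not_mem_line D C₁ A₁ (Ne.symm hAC₁) hDb₁)
  have detAB₁ := det_ne_zero_of_not_collinear D A₁ B₁
    (not_collinear_of_not_mem_line D A₁ B₁ hAB₁ hDc₁)
  -- foot facts
  obtain ⟨ffa1, ffa2, ffa3⟩ := foot_facts D B C Fa hBC hDa hFa
  obtain ⟨ffb1, ffb2, ffb3⟩ := foot_facts D C A Fb (Ne.symm hAC) hDb hFb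
  obtain ⟨ffc1, ffc2, ffc3⟩ := foot_facts D A B Fc hAB hDc hFc
  obtain ⟨ff1a1, ff1a2, ff1a3⟩ := foot_facts D B₁ C₁ F₁a hBC₁ hDa₁ hF₁a
  obtain ⟨ff1b1, ff1b2, ff1b3⟩ := foot_facts D C₁ A₁ F₁b (Ne.symm hAC₁) hDb₁ hF₁b
  obtain ⟨ff1c1, ff1c2, ff1c3⟩ := foot_facts D A₁ B₁ F₁c hAB₁ hDc₁ hF₁c
  -- vertex formulas
  have hA'eq := vertex_eq D o qq B C A' Fa detBC (hcirc B hB) (hcirc C hC) ffa1 ffa2 ffa3 h1 h2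
  have hB'eq := vertex_eq D o qq C A B' Fb detCA (hcirc C hC) (hcirc A hA) ffb1 ffb2 ffb3 h3 h4
  have hC'eq := vertex_eq D o qq A B C' Fc detAB (hcirc A hA) (hcirc B hB) ffc1 ffc2 ffc3 h5 h6
  have hA₁'eq := vertex_eq D o qq B₁ C₁ A₁' F₁a detBC₁ (hcirc B₁ hB₁) (hcirc C₁ hC₁)
    ff1a1 ff1a2 ff1a3 h1' h2'
  have hB₁'eq := vertex_eq D o qq C₁ A₁ B₁' F₁b detCA₁ (hcirc C₁ hC₁) (hcirc A₁ hA₁)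
    ff1b1 ff1b2 ff1b3 h3' h4'
  have hC₁'eq := vertex_eq D o qq A₁ B₁ C₁' F₁c detAB₁ (hcirc A₁ hA₁) (hcirc B₁ hB₁)
    ff1c1 ff1c2 ff1c3 h5' h6'
  -- the circle-equation data
  have hrS : 0 ≤ S.radius := by
    have := (EuclideanGeometry.mem_sphere).1 hA'S
    rw [← this]; exact dist_nonneg
  set u : Pt := (2:ℝ) • o - (S.center - D) with hu
  set lam : ℝ := ‖u‖ ^ 2 - S.radius ^ 2 with hlam
  have memS_iff : ∀ z : Pt, z ≠ D →
      ((D + (2:ℝ) • o - (qq / ‖z - D‖ ^ 2) • (z - D)) ∈ S ↔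
        lam * ‖z - D‖ ^ 2 - 2 * qq * (inner ℝ u (z - D) : ℝ) + qq ^ 2 = 0) := by
    intro z hz
    exact phi_mem_sphere_iff D o qq S hrS z hz
  have hGFa : lam * ‖Fa - D‖ ^ 2 - 2 * qq * (inner ℝ u (Fa - D) : ℝ) + qq ^ 2 = 0 :=
    (memS_iff Fa ffa3).1 (by rw [← hA'eq]; exact hA'S)
  have hGFb : lam * ‖Fb - D‖ ^ 2 - 2 * qq * (inner ℝ u (Fb - D) : ℝ) + qq ^ 2 = 0 :=
    (memS_iff Fb ffb3).1 (by rw [← hB'eq]; exact hB'S)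
  have hGFc : lam * ‖Fc - D‖ ^ 2 - 2 * qq * (inner ℝ u (Fc - D) : ℝ) + qq ^ 2 = 0 :=
    (memS_iff Fc ffc3).1 (by rw [← hC'eq]; exact hC'S)
  -- feet are pairwise distinct
  have hFaFb : Fa ≠ Fb := by
    intro h; apply hA'B'; rw [hA'eq, hB'eq, h]
  have hFaFc : Fa ≠ Fc := by
    intro h; apply hA'C'; rw [hA'eq, hC'eq, h]
  have hFbFc : Fb ≠ Fc := by
    intro h; apply hB'C'; rw [hB'eq, hC'eq, h]
  -- feet are not collinear
  have hFnc : ¬ Collinear ℝ ({Fa, Fb, Fc} : Set Pt) :=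
    not_collinear_of_mem_sphere E Fa Fb Fc hFaE hFbE hFcE hFaFb hFaFc hFbFc
  have detF := det_ne_zero_of_not_collinear Fa Fb Fc hFnc
  -- lam ≠ 0
  have hlam0 : lam ≠ 0 := by
    intro h0
    rw [h0] at hGFa hGFb hGFc
    have ea : (inner ℝ u (Fa - D) : ℝ) = qq / 2 := by
      have h2 : (2*qq) * (inner ℝ u (Fa - D) : ℝ) = (2*qq) * (qq/2) := by
        ring_nf
        ring_nf at hGFa
        linarith [hGFa]
      exact mul_left_cancel₀ (mul_ne_zero two_ne_zero hqq0) h2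
    have eb : (inner ℝ u (Fb - D) : ℝ) = qq / 2 := by
      have h2 : (2*qq) * (inner ℝ u (Fb - D) : ℝ) = (2*qq) * (qq/2) := by
        ring_nf
        ring_nf at hGFb
        linarith [hGFb]
      exact mul_left_cancel₀ (mul_ne_zero two_ne_zero hqq0) h2
    have ec : (inner ℝ u (Fc - D) : ℝ) = qq / 2 := by
      have h2 : (2*qq) * (inner ℝ u (Fc - D) : ℝ) = (2*qq) * (qq/2) := by
        ring_nf
        ring_nf at hGFc
        linarith [hGFc]
      exact mul_left_cancel₀ (mul_ne_zero two_ne_zero hqq0) h2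
    have p1 : (inner ℝ u (Fb - Fa) : ℝ) = 0 := by
      have : Fb - Fa = (Fb - D) - (Fa - D) := by abel
      rw [this, inner_sub_right, ea, eb]; ring
    have p2 : (inner ℝ u (Fc - Fa) : ℝ) = 0 := by
      have : Fc - Fa = (Fc - D) - (Fa - D) := by abel
      rw [this, inner_sub_right, ea, ec]; ring
    have p1' : (inner ℝ (Fb - Fa) u : ℝ) = 0 := by rw [real_inner_comm]; exact p1
    have p2' : (inner ℝ (Fc - Fa) u : ℝ) = 0 := by rw [real_inner_comm]; exact p2
    -- u ≠ 0 since qq ≠ 0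
    have hu0 : u ≠ 0 := by
      intro h
      rw [h, inner_zero_left] at ea
      apply hqq0
      linarith [ea]
    -- but u ⊥ both independent directions
    -- use perp_perp with u in the "vector" role
    have := perp_perp (Fb - Fa) (Fc - Fa) u detF p1 p2
    exact hu0 this
  -- the circle through the feet, described by the quadratic
  set m : Pt := D + (qq / lam) • u with hm
  have hGm : ∀ z : Pt, lam * ‖z - D‖ ^ 2 - 2 * qq * (inner ℝ u (z - D) : ℝ) + qq ^ 2
      = lam * (‖z - m‖ ^ 2 - ((qq / lam) ^ 2 * ‖u‖ ^ 2 - qq ^ 2 / lam)) := by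
    intro z
    have hzm : z - m = (z - D) - (qq / lam) • u := by rw [hm]; abel
    have hcm : (inner ℝ (z - D) u : ℝ) = inner ℝ u (z - D) := real_inner_comm _ _
    rw [hzm, norm_sub_sq_real (z - D) ((qq / lam) • u), real_inner_smul_right, norm_smul, mul_pow, Real.norm_eq_abs,
      sq_abs, hcm]
    field_simp
    ring
  set c₀ : ℝ := (qq / lam) ^ 2 * ‖u‖ ^ 2 - qq ^ 2 / lam with hc₀
  have hdistFa : ‖Fa - m‖ ^ 2 = c₀ := by
    have := hGFa
    rw [hGm Fa] at this
    rcases mul_eq_zero.1 this with h | h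
    · exact absurd h hlam0
    · linarith
  have hdistFb : ‖Fb - m‖ ^ 2 = c₀ := by
    have := hGFb
    rw [hGm Fb] at this
    rcases mul_eq_zero.1 this with h | h
    · exact absurd h hlam0
    · linarith
  have hdistFc : ‖Fc - m‖ ^ 2 = c₀ := by
    have := hGFc
    rw [hGm Fc] at this
    rcases mul_eq_zero.1 this with h | h
    · exact absurd h hlam0
    · linarith
  -- E has center m and radius dist Fa m
  have hEc : E.center = m := by
    have e1 : ‖Fa - E.center‖ ^ 2 = ‖Fb - E.center‖ ^ 2 := by
      have ha := (EuclideanGeometry.mem_sphere).1 hFaE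
      have hb := (EuclideanGeometry.mem_sphere).1 hFbE
      rw [← dist_eq_norm, ← dist_eq_norm, ha, hb]
    have e2 : ‖Fa - E.center‖ ^ 2 = ‖Fc - E.center‖ ^ 2 := by
      have ha := (EuclideanGeometry.mem_sphere).1 hFaE
      have hc := (EuclideanGeometry.mem_sphere).1 hFcE
      rw [← dist_eq_norm, ← dist_eq_norm, ha, hc]
    have f1 : ‖Fa - m‖ ^ 2 = ‖Fb - m‖ ^ 2 := by rw [hdistFa, hdistFb]
    have f2 : ‖Fa - m‖ ^ 2 = ‖Fc - m‖ ^ 2 := by rw [hdistFa, hdistFc]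
    have p1 := center_perp E.center m Fa Fb e1 f1
    have p2 := center_perp E.center m Fa Fc e2 f2
    exact sub_eq_zero.1 (perp_perp (Fb - Fa) (Fc - Fa) (E.center - m) detF p1 p2)
  have hEr : E.radius = dist Fa m := by
    have := (EuclideanGeometry.mem_sphere).1 hFaE
    rw [← this, hEc]
  have memE_iff : ∀ z : Pt, z ∈ E ↔ ‖z - m‖ ^ 2 = c₀ := by
    intro z
    rw [EuclideanGeometry.mem_sphere, hEc, hEr]
    constructor
    · intro h
      rw [dist_eq_norm] at h
      rw [h, dist_eq_norm]
      exact hdistFa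
    · intro h
      rw [dist_eq_norm, dist_eq_norm]
      have h' : ‖z - m‖ ^ 2 = ‖Fa - m‖ ^ 2 := by rw [h, hdistFa]
      exact (sq_eq_sq₀ (norm_nonneg _) (norm_nonneg _)).1 h'
  -- the master per-foot equivalence
  have perfoot : ∀ (F V : Pt), F ≠ D →
      V = D + (2:ℝ) • o - (qq / ‖F - D‖ ^ 2) • (F - D) → (F ∈ E ↔ V ∈ S) := by
    intro F V hFD hVeq
    rw [memE_iff F, hVeq, memS_iff F hFD, hGm F]
    constructor
    · intro h
      rw [h]
      simp [hc₀]
    · intro h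
      rcases mul_eq_zero.1 h with h' | h'
      · exact absurd h' hlam0
      · linarith [h']
  have ia := perfoot F₁a A₁' ff1a3 hA₁'eq
  have ib := perfoot F₁b B₁' ff1b3 hB₁'eq
  have ic := perfoot F₁c C₁' ff1c3 hC₁'eq
  rw [ia, ib, ic]
end
end

section
/- Let A, B, C be noncollinear points on a circle Γ in the Euclidean plane, and let D be a point not on Γ and not on any of the lines BC, CA, AB. Then the three orthogonal projections of D onto the lines BC, CA, AB are noncollinear; consequently there is a unique circle (the pedal circle of ABC with respect to D) passing through them. -/
open EuclideanGeometry

noncomputable section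

private lemma pt_ext {X Y : Pt} (h0 : X 0 = Y 0) (h1 : X 1 = Y 1) : X = Y := by
  ext i
  fin_cases i <;> assumption

private lemma dist_sq' (X Y : Pt) : dist X Y ^ 2 = (X 0 - Y 0)^2 + (X 1 - Y 1)^2 := by
  rw [EuclideanSpace.dist_eq, Real.sq_sqrt (by positivity)]
  simp [Fin.sum_univ_two, Real.dist_eq, sq_abs]

private lemma sum_sq_ne {X Y : Pt} (h : X ≠ Y) :
    (Y 0 - X 0)^2 + (Y 1 - X 1)^2 ≠ 0 := by
  intro hs
  have h0 : Y 0 - X 0 = 0 := by nlinarith [sq_nonneg (Y 0 - X 0), sq_nonneg (Y 1 - X 1)]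
  have h1 : Y 1 - X 1 = 0 := by nlinarith [sq_nonneg (Y 0 - X 0), sq_nonneg (Y 1 - X 1)]
  exact h (pt_ext (by linarith) (by linarith)).symm

private lemma collinear_det {P Q R : Pt} (h : Collinear ℝ ({P, Q, R} : Set Pt)) :
    (Q 0 - P 0) * (R 1 - P 1) - (Q 1 - P 1) * (R 0 - P 0) = 0 := by
  obtain ⟨v, hv⟩ := (collinear_iff_of_mem (Set.mem_insert P _)).1 h
  obtain ⟨tq, hq⟩ := hv Q (by simp)
  obtain ⟨tr, hr⟩ := hv R (by simp)
  have hq0 : Q 0 = tq * v 0 + P 0 := by rw [hq]; simp [PiLp.add_apply, PiLp.smul_apply]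
  have hq1 : Q 1 = tq * v 1 + P 1 := by rw [hq]; simp [PiLp.add_apply, PiLp.smul_apply]
  have hr0 : R 0 = tr * v 0 + P 0 := by rw [hr]; simp [PiLp.add_apply, PiLp.smul_apply]
  have hr1 : R 1 = tr * v 1 + P 1 := by rw [hr]; simp [PiLp.add_apply, PiLp.smul_apply]
  rw [hq0, hq1, hr0, hr1]; ring

private lemma det_collinear {P Q R : Pt}
    (h : (Q 0 - P 0) * (R 1 - P 1) - (Q 1 - P 1) * (R 0 - P 0) = 0) :
    Collinear ℝ ({P, Q, R} : Set Pt) := by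
  by_cases hq : Q = P
  · refine (collinear_pair ℝ P R).subset ?_
    intro x hx
    rcases hx with rfl | hx
    · exact Set.mem_insert _ _
    · rcases hx with rfl | hx
      · rw [hq]; exact Set.mem_insert _ _
      · rcases hx with rfl; exact Set.mem_insert_of_mem _ rfl
  · apply (collinear_iff_of_mem (Set.mem_insert P _)).2
    refine ⟨Q - P, fun p hp => ?_⟩
    rcases hp with rfl | hp
    · exact ⟨0, by simp⟩
    rcases hp with rfl | hp
    · refine ⟨1, ?_⟩
      apply pt_ext <;> simp [PiLp.add_apply, PiLp.smul_apply, PiLp.sub_apply]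
    rcases hp with rfl
    by_cases h0 : Q 0 - P 0 ≠ 0
    · refine ⟨(p 0 - P 0) / (Q 0 - P 0), ?_⟩
      apply pt_ext
      · simp only [PiLp.add_apply, PiLp.smul_apply, PiLp.sub_apply, smul_eq_mul, vadd_eq_add]
        field_simp
        ring
      · simp only [PiLp.add_apply, PiLp.smul_apply, PiLp.sub_apply, smul_eq_mul, vadd_eq_add]
        field_simp
        linear_combination h
    · push_neg at h0
      have h1 : Q 1 - P 1 ≠ 0 := by
        intro h1
        exact hq (pt_ext (by linarith) (by linarith))
      refine ⟨(p 1 - P 1) / (Q 1 - P 1), ?_⟩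
      apply pt_ext
      · simp only [PiLp.add_apply, PiLp.smul_apply, PiLp.sub_apply, smul_eq_mul, vadd_eq_add]
        have hp0 : (Q 1 - P 1) * (p 0 - P 0) = 0 := by linear_combination -h + (p 1 - P 1) * h0
        rcases mul_eq_zero.1 hp0 with hc | hc
        · exact absurd hc h1
        · rw [h0]; linarith
      · simp only [PiLp.add_apply, PiLp.smul_apply, PiLp.sub_apply, smul_eq_mul, vadd_eq_add]
        field_simp
        ring

private lemma isFoot_coords {D X Y F : Pt} (h : IsFoot D X Y F) :
    ∃ t : ℝ, (F 0 = X 0 + t * (Y 0 - X 0) ∧ F 1 = X 1 + t * (Y 1 - X 1)) ∧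
      t * ((Y 0 - X 0)^2 + (Y 1 - X 1)^2)
        = (D 0 - X 0) * (Y 0 - X 0) + (D 1 - X 1) * (Y 1 - X 1) := by
  obtain ⟨h1, h2⟩ := h
  have hv : F -ᵥ X ∈ vectorSpan ℝ ({X, Y} : Set Pt) := by
    have h1' : F ∈ affineSpan ℝ ({X, Y} : Set Pt) := h1
    have := AffineSubspace.vsub_mem_direction h1' (left_mem_affineSpan_pair ℝ X Y)
    rwa [direction_affineSpan] at this
  obtain ⟨t, ht⟩ := mem_vectorSpan_pair_rev.1 hv
  have ht0 : F 0 - X 0 = t * (Y 0 - X 0) := by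
    have := congrArg (fun v : Pt => v 0) ht
    simpa [PiLp.smul_apply, PiLp.sub_apply] using this.symm
  have ht1 : F 1 - X 1 = t * (Y 1 - X 1) := by
    have := congrArg (fun v : Pt => v 1) ht
    simpa [PiLp.smul_apply, PiLp.sub_apply] using this.symm
  have h2' : (D 0 - F 0) * (X 0 - Y 0) + (D 1 - F 1) * (X 1 - Y 1) = 0 := by
    have := h2
    simp [PiLp.inner_apply, RCLike.inner_apply, PiLp.sub_apply, Fin.sum_univ_two] at this
    linear_combination this
  exact ⟨t, ⟨by linarith, by linarith⟩,
    by linear_combination h2' + (X 0 - Y 0) * ht0 + (X 1 - Y 1) * ht1⟩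

private lemma foot_eqn (b1 b2 c1 c2 d1 d2 r ta : ℝ)
    (hb : b1^2+b2^2 = r^2) (hc : c1^2+c2^2 = r^2)
    (hN : (c1-b1)^2+(c2-b2)^2 ≠ 0)
    (hta : ta * ((c1-b1)^2+(c2-b2)^2) = (d1-b1)*(c1-b1)+(d2-b2)*(c2-b2)) :
    2*r^2*(b1 + ta*(c1-b1)) = d1*r^2 + c1*r^2 + b2*c2*d1 + (-1)*b2*c1*d2 + b1*r^2 + (-1)*b1*c2*d2 + (-1)*b1*c1*d1
      ∧ 2*r^2*(b2 + ta*(c2-b2)) = d2*r^2 + c2*r^2 + b2*r^2 + (-1)*b2*c2*d2 + (-1)*b2*c1*d1 + (-1)*b1*c2*d1 + b1*c1*d2 := by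
  constructor
  · apply mul_right_cancel₀ hN
    linear_combination (2*c1*r^2 + (-2)*b1*r^2) * hta + (c2^2*d1 + (-2)*c1*c2*d2 + c1*c2^2 + (-1)*c1^2*d1 + c1^3 + (-1)*b2*c2*d1 + b2*c1*d2 + b1*c2*d2 + (-1)*b1*c2^2 + b1*c1*d1 + (-1)*b1*c1^2) * hb + ((-1)*b2*c2*d1 + b2*c1*d2 + b2^2*d1 + (-1)*b2^2*c1 + b1*c2*d2 + b1*c1*d1 + (-2)*b1*b2*d2 + b1*b2^2 + (-1)*b1^2*d1 + (-1)*b1^2*c1 + b1^3) * hc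
  · apply mul_right_cancel₀ hN
    linear_combination (2*c2*r^2 + (-2)*b2*r^2) * hta + ((-1)*c2^2*d2 + c2^3 + (-2)*c1*c2*d1 + c1^2*d2 + c1^2*c2 + b2*c2*d2 + (-1)*b2*c2^2 + b2*c1*d1 + (-1)*b2*c1^2 + b1*c2*d1 + (-1)*b1*c1*d2) * hb + (b2*c2*d2 + b2*c1*d1 + (-1)*b2^2*d2 + (-1)*b2^2*c2 + b2^3 + b1*c2*d1 + (-1)*b1*c1*d2 + (-2)*b1*b2*d1 + b1^2*d2 + (-1)*b1^2*c2 + b1^2*b2) * hc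

private lemma det_main (a1 a2 b1 b2 c1 c2 d1 d2 r fa1 fa2 fb1 fb2 fc1 fc2 : ℝ)
    (ha : a1^2+a2^2 = r^2) (hb : b1^2+b2^2 = r^2) (hc : c1^2+c2^2 = r^2)
    (hfa1 : 2*r^2*fa1 = d1*r^2 + c1*r^2 + b2*c2*d1 + (-1)*b2*c1*d2 + b1*r^2 + (-1)*b1*c2*d2 + (-1)*b1*c1*d1)
    (hfa2 : 2*r^2*fa2 = d2*r^2 + c2*r^2 + b2*r^2 + (-1)*b2*c2*d2 + (-1)*b2*c1*d1 + (-1)*b1*c2*d1 + b1*c1*d2)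
    (hfb1 : 2*r^2*fb1 = d1*r^2 + c1*r^2 + a2*c2*d1 + (-1)*a2*c1*d2 + a1*r^2 + (-1)*a1*c2*d2 + (-1)*a1*c1*d1)
    (hfb2 : 2*r^2*fb2 = d2*r^2 + c2*r^2 + a2*r^2 + (-1)*a2*c2*d2 + (-1)*a2*c1*d1 + (-1)*a1*c2*d1 + a1*c1*d2)
    (hfc1 : 2*r^2*fc1 = d1*r^2 + b1*r^2 + a2*b2*d1 + (-1)*a2*b1*d2 + a1*r^2 + (-1)*a1*b2*d2 + (-1)*a1*b1*d1)
    (hfc2 : 2*r^2*fc2 = d2*r^2 + b2*r^2 + a2*r^2 + (-1)*a2*b2*d2 + (-1)*a2*b1*d1 + (-1)*a1*b2*d1 + a1*b1*d2) :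
    ((fb1-fa1)*(fc2-fa2) - (fb2-fa2)*(fc1-fa1)) * (4*r^4)
      = r^2*(r^2-(d1^2+d2^2)) * ((b1-a1)*(c2-a2)-(b2-a2)*(c1-a1)) := by
  linear_combination ((-2)*r^2*fc2 + 2*r^2*fb2) * hfa1 + (2*r^2*fc1 + (-2)*r^2*fb1) * hfa2 +
    (2*r^2*fc2 + (-1)*d2*r^2 + (-1)*c2*r^2 + (-1)*b2*r^2 + b2*c2*d2 + b2*c1*d1 + b1*c2*d1 + (-1)*b1*c1*d2) * hfb1 + ((-2)*r^2*fc1 + d1*r^2 + c1*r^2 + b2*c2*d1 + (-1)*b2*c1*d2 + b1*r^2 + (-1)*b1*c2*d2 + (-1)*b1*c1*d1) * hfb2 +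
    (b2*r^2 + (-1)*b2*c2*d2 + (-1)*b2*c1*d1 + (-1)*b1*c2*d1 + b1*c1*d2 + (-1)*a2*r^2 + a2*c2*d2 + a2*c1*d1 + a1*c2*d1 + (-1)*a1*c1*d2) * hfc1 + ((-1)*b2*c2*d1 + b2*c1*d2 + (-1)*b1*r^2 + b1*c2*d2 + b1*c1*d1 + a2*c2*d1 + (-1)*a2*c1*d2 + a1*r^2 + (-1)*a1*c2*d2 + (-1)*a1*c1*d1) * hfc2 +
    ((-1)*b2*c2^2*d1 + b2*c1*d2^2 + b2*c1*d1^2 + (-1)*b2*c1^2*d1 + b2^2*c2*d1 + (-1)*b2^2*c1*d2 + (-1)*b1*c2*d2^2 + (-1)*b1*c2*d1^2 + b1*c2^2*d2 + b1*c1^2*d2 + b1^2*c2*d1 + (-1)*b1^2*c1*d2 + a2*c2^2*d1 + a2*c1^2*d1 + (-1)*a2*b2^2*d1 + (-1)*a2*b1^2*d1 + (-1)*a1*c2^2*d2 + (-1)*a1*c1^2*d2 + a1*b2^2*d2 + a1*b1^2*d2) * ha + ((-1)*a2*c1*d2^2 + (-1)*a2*c1*d1^2 + (-1)*a2^2*c2*d1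 + a2^2*c1*d2 + a2^3*d1 + a1*c2*d2^2 + a1*c2*d1^2 + (-1)*a1*a2^2*d2 + (-1)*a1^2*c2*d1 + a1^2*c1*d2 + a1^2*a2*d1 + (-1)*a1^3*d2) * hb + (a2*b1*d2^2 + a2*b1*d1^2 + a2^2*b2*d1 + (-1)*a2^2*b1*d2 + (-1)*a2^3*d1 + (-1)*a1*b2*d2^2 + (-1)*a1*b2*d1^2 + a1*a2^2*d2 + a1^2*b2*d1 + (-1)*a1^2*b1*d2 + (-1)*a1^2*a2*d1 + a1^3*d2) * hc

/-- Well-posedness of the pedal circle (Definition 2.1): for `D` off the circumcircle and the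
side lines, the three pedal feet are noncollinear, so a unique circle passes through them. -/
theorem pedal_feet_noncollinear
    (Γ : EuclideanGeometry.Sphere Pt) (A B C D : Pt)
    (hABC : ¬ Collinear ℝ ({A, B, C} : Set Pt))
    (hA : A ∈ Γ) (hB : B ∈ Γ) (hC : C ∈ Γ) (hD : D ∉ Γ)
    (hDa : D ∉ L B C) (hDb : D ∉ L C A) (hDc : D ∉ L A B)
    (Fa Fb Fc : Pt)
    (hFa : IsFoot D B C Fa) (hFb : IsFoot D C A Fb) (hFc : IsFoot D A B Fc) :
    ¬ Collinear ℝ ({Fa, Fb, Fc} : Set Pt) ∧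
      ∃! E : EuclideanGeometry.Sphere Pt, Fa ∈ E ∧ Fb ∈ E ∧ Fc ∈ E := by
  classical
  obtain ⟨ta, ⟨hta0, hta1⟩, hta⟩ := isFoot_coords hFa
  obtain ⟨tb, ⟨htb0, htb1⟩, htb⟩ := isFoot_coords hFb
  obtain ⟨tc, ⟨htc0, htc1⟩, htc⟩ := isFoot_coords hFc
  set O : Pt := Γ.center with hOdef
  set r : ℝ := Γ.radius with hrdef
  have hrA : dist A O = r := EuclideanGeometry.mem_sphere.1 hA
  have hrB : dist B O = r := EuclideanGeometry.mem_sphere.1 hB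
  have hrC : dist C O = r := EuclideanGeometry.mem_sphere.1 hC
  have ha2 : (A 0 - O 0)^2 + (A 1 - O 1)^2 = r^2 := by rw [← dist_sq', hrA]
  have hb2 : (B 0 - O 0)^2 + (B 1 - O 1)^2 = r^2 := by rw [← dist_sq', hrB]
  have hc2 : (C 0 - O 0)^2 + (C 1 - O 1)^2 = r^2 := by rw [← dist_sq', hrC]
  have hAB : A ≠ B := by
    rintro rfl
    refine hABC ((collinear_pair ℝ A C).subset ?_)
    intro x hx
    simp only [Set.mem_insert_iff, Set.mem_singleton_iff] at hx ⊢
    tauto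
  have hBC : B ≠ C := by
    rintro rfl
    refine hABC ((collinear_pair ℝ A B).subset ?_)
    intro x hx
    simp only [Set.mem_insert_iff, Set.mem_singleton_iff] at hx ⊢
    tauto
  have hCA : C ≠ A := by
    rintro rfl
    refine hABC ((collinear_pair ℝ C B).subset ?_)
    intro x hx
    simp only [Set.mem_insert_iff, Set.mem_singleton_iff] at hx ⊢
    tauto
  have hr0 : r ≠ 0 := by
    intro h
    have hA0 : A = O := dist_eq_zero.1 (by rw [hrA, h])
    have hB0 : B = O := dist_eq_zero.1 (by rw [hrB, h])
    exact hAB (hA0.trans hB0.symm)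
  have hrn : 0 ≤ r := hrA ▸ dist_nonneg
  have hd2 : (D 0 - O 0)^2 + (D 1 - O 1)^2 ≠ r^2 := by
    intro h
    apply hD
    rw [EuclideanGeometry.mem_sphere]
    have hsq : dist D O ^ 2 = r ^ 2 := by rw [dist_sq']; exact h
    have hfac : (dist D O - r) * (dist D O + r) = 0 := by linear_combination hsq
    rcases mul_eq_zero.1 hfac with h' | h'
    · show dist D O = r; linarith
    · have hdn : (0:ℝ) ≤ dist D O := dist_nonneg
      have : r = 0 := by linarith
      exact absurd this hr0
  have hNa : ((C 0 - O 0) - (B 0 - O 0))^2 + ((C 1 - O 1) - (B 1 - O 1))^2 ≠ 0 := by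
    have h := sum_sq_ne hBC
    have e : ((C 0 - O 0) - (B 0 - O 0))^2 + ((C 1 - O 1) - (B 1 - O 1))^2
        = (C 0 - B 0)^2 + (C 1 - B 1)^2 := by ring
    rw [e]; exact h
  have hNb : ((A 0 - O 0) - (C 0 - O 0))^2 + ((A 1 - O 1) - (C 1 - O 1))^2 ≠ 0 := by
    have h := sum_sq_ne hCA
    have e : ((A 0 - O 0) - (C 0 - O 0))^2 + ((A 1 - O 1) - (C 1 - O 1))^2
        = (A 0 - C 0)^2 + (A 1 - C 1)^2 := by ring
    rw [e]; exact h
  have hNc : ((B 0 - O 0) - (A 0 - O 0))^2 + ((B 1 - O 1) - (A 1 - O 1))^2 ≠ 0 := by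
    have h := sum_sq_ne hAB
    have e : ((B 0 - O 0) - (A 0 - O 0))^2 + ((B 1 - O 1) - (A 1 - O 1))^2
        = (B 0 - A 0)^2 + (B 1 - A 1)^2 := by ring
    rw [e]; exact h
  have hfa := foot_eqn (B 0 - O 0) (B 1 - O 1) (C 0 - O 0) (C 1 - O 1)
    (D 0 - O 0) (D 1 - O 1) r ta hb2 hc2 hNa (by linear_combination hta)
  have hfb := foot_eqn (C 0 - O 0) (C 1 - O 1) (A 0 - O 0) (A 1 - O 1)
    (D 0 - O 0) (D 1 - O 1) r tb hc2 ha2 hNb (by linear_combination htb)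
  have hfc := foot_eqn (A 0 - O 0) (A 1 - O 1) (B 0 - O 0) (B 1 - O 1)
    (D 0 - O 0) (D 1 - O 1) r tc ha2 hb2 hNc (by linear_combination htc)
  have hdet := det_main (A 0 - O 0) (A 1 - O 1) (B 0 - O 0) (B 1 - O 1)
    (C 0 - O 0) (C 1 - O 1) (D 0 - O 0) (D 1 - O 1) r
    (Fa 0 - O 0) (Fa 1 - O 1) (Fb 0 - O 0) (Fb 1 - O 1) (Fc 0 - O 0) (Fc 1 - O 1)
    ha2 hb2 hc2
    (by linear_combination hfa.1 + 2*r^2*hta0) (by linear_combination hfa.2 + 2*r^2*hta1)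
    (by linear_combination hfb.1 + 2*r^2*htb0) (by linear_combination hfb.2 + 2*r^2*htb1)
    (by linear_combination hfc.1 + 2*r^2*htc0) (by linear_combination hfc.2 + 2*r^2*htc1)
  have hdetABC : (B 0 - A 0) * (C 1 - A 1) - (B 1 - A 1) * (C 0 - A 0) ≠ 0 :=
    fun h => hABC (det_collinear h)
  have hrhs : r^2*(r^2-((D 0 - O 0)^2+(D 1 - O 1)^2))
      * (((B 0 - O 0)-(A 0 - O 0))*((C 1 - O 1)-(A 1 - O 1))
        -((B 1 - O 1)-(A 1 - O 1))*((C 0 - O 0)-(A 0 - O 0))) ≠ 0 := by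
    apply mul_ne_zero (mul_ne_zero (pow_ne_zero 2 hr0) (sub_ne_zero.2 (Ne.symm hd2)))
    have e : ((B 0 - O 0)-(A 0 - O 0))*((C 1 - O 1)-(A 1 - O 1))
        -((B 1 - O 1)-(A 1 - O 1))*((C 0 - O 0)-(A 0 - O 0))
        = (B 0 - A 0) * (C 1 - A 1) - (B 1 - A 1) * (C 0 - A 0) := by ring
    rw [e]; exact hdetABC
  have hfeet : (Fb 0 - Fa 0) * (Fc 1 - Fa 1) - (Fb 1 - Fa 1) * (Fc 0 - Fa 0) ≠ 0 := by
    intro h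
    apply hrhs
    linear_combination (-1) * hdet + (4*r^4) * h
  have hncol : ¬ Collinear ℝ ({Fa, Fb, Fc} : Set Pt) := fun h => hfeet (collinear_det h)
  refine ⟨hncol, ?_⟩
  have hind : AffineIndependent ℝ ![Fa, Fb, Fc] :=
    affineIndependent_iff_not_collinear_set.2 hncol
  have hspan : affineSpan ℝ (Set.range ![Fa, Fb, Fc]) = ⊤ := by
    rw [hind.affineSpan_eq_top_iff_card_eq_finrank_add_one]
    simp [finrank_euclideanSpace_fin]
  obtain ⟨cs, ⟨hcen, hsub⟩, huniq⟩ := hind.existsUnique_dist_eq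
  refine ⟨cs, ⟨?_, ?_, ?_⟩, ?_⟩
  · exact EuclideanGeometry.Sphere.mem_coe.1 (hsub ⟨0, rfl⟩)
  · exact EuclideanGeometry.Sphere.mem_coe.1 (hsub ⟨1, rfl⟩)
  · exact EuclideanGeometry.Sphere.mem_coe.1 (hsub ⟨2, rfl⟩)
  · rintro E ⟨h1, h2, h3⟩
    apply huniq
    constructor
    · rw [hspan]; exact AffineSubspace.mem_top ℝ _ _
    · rintro p ⟨i, rfl⟩
      fin_cases i
      · exact EuclideanGeometry.Sphere.mem_coe.2 h1
      · exact EuclideanGeometry.Sphere.mem_coe.2 h2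
      · exact EuclideanGeometry.Sphere.mem_coe.2 h3
end
end
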